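/- Let X ⊆ ℝ^m be nonempty, closed, and convex, and let c : ℝ^m → ℝ^m be continuous on X. If x* is an evolutionarily stable state of (X, c), then x* is ⪯_c-minimal. -/

import Mathlib

open Set

noncomputable section

/-- The path point `y_ε = ε x + (1 - ε) y`. -/
def pathPt {m : ℕ} (x y : EuclideanSpace ℝ (Fin m)) (ε : ℝ) :
    EuclideanSpace ℝ (Fin m) :=
  ε • x + (1 - ε) • y

/-- The linear vector polyorder `x ⪯_c y`: for all `ε ∈ [0,1]`,
`⟨x, c(y_ε)⟩ ≤ ⟨y, c(y_ε)⟩`. -/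
def vecLe {m : ℕ} (c : EuclideanSpace ℝ (Fin m) → EuclideanSpace ℝ (Fin m))
    (x y : EuclideanSpace ℝ (Fin m)) : Prop :=
  ∀ ε ∈ Icc (0:ℝ) 1,
    (inner ℝ x (c (pathPt x y ε)) : ℝ) ≤ inner ℝ y (c (pathPt x y ε))

/-- The strict part `x ≺_c y` of the linear vector polyorder. -/
def vecLt {m : ℕ} (c : EuclideanSpace ℝ (Fin m) → EuclideanSpace ℝ (Fin m))
    (x y : EuclideanSpace ℝ (Fin m)) : Prop :=
  vecLe c x y ∧ ¬ vecLe c y x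

/-- `x*` is `⪯_c`-minimal in `X`: no element of `X` strictly dominates it. -/
def vecMinimal {m : ℕ} (X : Set (EuclideanSpace ℝ (Fin m)))
    (c : EuclideanSpace ℝ (Fin m) → EuclideanSpace ℝ (Fin m))
    (xs : EuclideanSpace ℝ (Fin m)) : Prop :=
  ∀ x ∈ X, ¬ vecLt c x xs

/-- `x*` is an evolutionarily stable state of `(X, c)`: on some neighborhood
of `x*` relative to `X`, every `x ≠ x*` satisfies `⟨x*, c(x)⟩ < ⟨x, c(x)⟩`. -/
def IsESS {m : ℕ} (X : Set (EuclideanSpace ℝ (Fin m)))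
    (c : EuclideanSpace ℝ (Fin m) → EuclideanSpace ℝ (Fin m))
    (xs : EuclideanSpace ℝ (Fin m)) : Prop :=
  ∃ O : Set (EuclideanSpace ℝ (Fin m)), O ⊆ X ∧ O ∈ nhdsWithin xs X ∧
    ∀ x ∈ O, x ≠ xs → (inner ℝ xs (c x) : ℝ) < inner ℝ x (c x)

/-- An evolutionarily stable state is `⪯_c`-minimal. -/
theorem isESS_vecMinimal {m : ℕ} (X : Set (EuclideanSpace ℝ (Fin m)))
    (hXne : X.Nonempty) (hXcl : IsClosed X) (hXconv : Convex ℝ X)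
    (c : EuclideanSpace ℝ (Fin m) → EuclideanSpace ℝ (Fin m)) (hc : ContinuousOn c X)
    (xs : EuclideanSpace ℝ (Fin m)) (hxs : xs ∈ X)
    (hess : IsESS X c xs) : vecMinimal X c xs := by
  intro x hx hlt
  obtain ⟨hle, hnle⟩ := hlt
  by_cases hxx : x = xs
  · exact hnle (hxx ▸ hle)
  obtain ⟨O, hOX, hOnhds, hO⟩ := hess
  -- the path ε ↦ pathPt x xs ε tends to xs within X as ε → 0⁺ (within Ioc 0 1)
  have hf0 : pathPt x xs 0 = xs := by simp [pathPt]
  have hcont : Continuous (fun ε : ℝ => pathPt x xs ε) := by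
    unfold pathPt; continuity
  have hmaps : ∀ ε ∈ Ioc (0:ℝ) 1, pathPt x xs ε ∈ X := by
    intro ε hε
    exact hXconv hx hxs hε.1.le (by linarith [hε.2]) (by ring)
  have htend : Filter.Tendsto (fun ε : ℝ => pathPt x xs ε)
      (nhdsWithin 0 (Ioc (0:ℝ) 1)) (nhdsWithin xs X) := by
    have h1 : Filter.Tendsto (fun ε : ℝ => pathPt x xs ε)
        (nhdsWithin 0 (Ioc (0:ℝ) 1)) (nhds xs) := by
      have := hcont.tendsto 0
      rw [hf0] at this
      exact this.mono_left nhdsWithin_le_nhds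
    refine tendsto_nhdsWithin_of_tendsto_nhds_of_eventually_within _ h1 ?_
    filter_upwards [self_mem_nhdsWithin] with ε hε using hmaps ε hε
  have hne : (nhdsWithin (0:ℝ) (Ioc (0:ℝ) 1)).NeBot := by
    apply mem_closure_iff_nhdsWithin_neBot.mp
    rw [closure_Ioc (by norm_num : (0:ℝ) ≠ 1)]
    exact ⟨le_refl 0, by norm_num⟩
  have hev : ∀ᶠ ε in nhdsWithin (0:ℝ) (Ioc (0:ℝ) 1),
      pathPt x xs ε ∈ O := htend hOnhds
  have hev2 : ∀ᶠ ε in nhdsWithin (0:ℝ) (Ioc (0:ℝ) 1),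
      ε ∈ Ioc (0:ℝ) 1 := self_mem_nhdsWithin
  obtain ⟨ε, hεO, hεI⟩ := (hev.and hev2).exists
  set y := pathPt x xs ε with hy
  have hyne : y ≠ xs := by
    intro h
    apply hxx
    have : ε • x + (1 - ε) • xs = xs := h
    have h2 : ε • x = ε • xs := by
      have := congrArg (fun z => z - (1 - ε) • xs) this
      simp at this
      rw [this]
      module
    have := smul_right_injective (EuclideanSpace ℝ (Fin m)) (ne_of_gt hεI.1) h2
    exact this
  have hlt' : (inner ℝ xs (c y) : ℝ) < inner ℝ y (c y) := hO y hεO hyne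
  have hexp : (inner ℝ y (c y) : ℝ) = ε * inner ℝ x (c y) + (1 - ε) * inner ℝ xs (c y) := by
    rw [hy]
    show (inner ℝ (ε • x + (1 - ε) • xs) (c y) : ℝ) = _
    rw [inner_add_left, real_inner_smul_left, real_inner_smul_left]
  have hle' : (inner ℝ x (c y) : ℝ) ≤ inner ℝ xs (c y) :=
    hle ε ⟨hεI.1.le, hεI.2⟩
  nlinarith [hεI.1]
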